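/- For nonnegative integers n > m ≥ 0, 0 ≤ i ≤ m-1, and 0 ≤ k ≤ i, the binomial inequality C(n-1-k, m-k) · C(n-1-i+k, m-i+k) ≥ C(n, m+1) · C(n-2-i, m-1-i) holds. -/

import Mathlib

lemma aux_id (d t : ℕ) :
    (t + 1) * ((t + 1 + d).choose d) = (t + 1 + d) * ((t + d).choose d) := by
  have h := Nat.add_one_mul_choose_eq (t + d) t
  have h1 : (t + d).choose t = (t + d).choose d := by
    rw [← Nat.choose_symm (by omega : d ≤ t + d)]
    congr 1; omega
  have h3 : (t + 1 + d).choose d = (t + d + 1).choose (t + 1) := by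
    rw [show t + 1 + d = t + d + 1 from by ring, ← Nat.choose_symm (by omega : d ≤ t + d + 1)]
    congr 1; omega
  rw [h3, ← h1]
  calc (t + 1) * ((t + d + 1).choose (t + 1))
      = (t + d + 1).choose (t + 1) * (t + 1) := by ring
    _ = (t + d + 1) * ((t + d).choose t) := h.symm
    _ = (t + 1 + d) * ((t + d).choose t) := by ring_nf

lemma aux_step (d u c : ℕ) :
    (u + d).choose d * (u + (c + 1) + d).choose d
      ≤ (u + 1 + d).choose d * (u + c + d).choose d := by
  have h1 := aux_id d u
  have h2 := aux_id d (u + c)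
  have hB : u + (c + 1) + d = u + c + 1 + d := by ring
  rw [hB]
  set A := (u + d).choose d
  set B := (u + c + 1 + d).choose d
  set C := (u + 1 + d).choose d
  set D := (u + c + d).choose d
  refine Nat.le_of_mul_le_mul_left ?_ (show 0 < (u+1)*(u+c+1) by positivity)
  have key : (u + 1) * (u + c + d + 1) ≤ (u + d + 1) * (u + c + 1) := by nlinarith
  calc (u+1)*(u+c+1) * (A * B) = A * ((u+1) * ((u+c+1) * B)) := by ring
    _ = A * ((u+1) * ((u + c + d + 1) * D)) := by rw [show u+c+1+d = u+c+d+1 by ring] at h2; rw [h2]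
    _ = (A * D) * ((u+1) * (u + c + d + 1)) := by ring
    _ ≤ (A * D) * ((u + d + 1) * (u + c + 1)) := Nat.mul_le_mul_left _ key
    _ = ((u+1) * C) * ((u+c+1) * D) := by rw [show u+1+d = u+d+1 by ring] at h1; rw [h1]; ring
    _ = (u+1)*(u+c+1) * (C * D) := by ring

lemma aux_main (d : ℕ) : ∀ j u c, j ≤ c →
    (u + d).choose d * (u + c + d).choose d
      ≤ (u + j + d).choose d * (u + (c - j) + d).choose d := by
  intro j
  induction j with
  | zero => intro u c _; simp
  | succ j ih =>
    intro u c hj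
    rcases Nat.eq_or_lt_of_le hj with h | h
    · rw [← h]
      simp [mul_comm]
    · have hc : c = (c - 2) + 1 + 1 := by omega
      calc (u + d).choose d * (u + c + d).choose d
          = (u + d).choose d * (u + ((c-1) + 1) + d).choose d := by
            rw [show u + ((c-1)+1) = u + c by omega]
        _ ≤ (u + 1 + d).choose d * (u + (c - 1) + d).choose d := aux_step d u (c-1)
        _ = (u + 1 + d).choose d * (u + 1 + (c - 2) + d).choose d := by
            rw [show u + 1 + (c-2) = u + (c-1) by omega]
        _ ≤ (u + 1 + j + d).choose d * (u + 1 + ((c - 2) - j) + d).choose d :=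
            ih (u+1) (c-2) (by omega)
        _ = (u + (j+1) + d).choose d * (u + (c - (j+1)) + d).choose d := by
            rw [show u + 1 + j = u + (j+1) by omega, show u + 1 + (c-2-j) = u + (c - (j+1)) by omega]

theorem stmt_18 (n m i k : ℕ) (hmn : m < n) (hi : i + 1 ≤ m) (hk : k ≤ i) :
    n.choose (m + 1) * (n - 2 - i).choose (m - 1 - i)
      ≤ (n - 1 - k).choose (m - k) * (n - 1 - i + k).choose (m - i + k) := by
  set d := n - 1 - m with hd
  have hn : n = m + 1 + d := by omega
  have e1 : n.choose (m + 1) = (m + 1 + d).choose d := by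
    rw [hn, ← Nat.choose_symm (by omega : d ≤ m + 1 + d)]
    congr 1; omega
  have e2 : (n - 2 - i).choose (m - 1 - i) = ((m - 1 - i) + d).choose d := by
    rw [show n - 2 - i = (m - 1 - i) + d by omega,
        ← Nat.choose_symm (by omega : d ≤ (m - 1 - i) + d)]
    congr 1; omega
  have e3 : (n - 1 - k).choose (m - k) = ((m - k) + d).choose d := by
    rw [show n - 1 - k = (m - k) + d by omega,
        ← Nat.choose_symm (by omega : d ≤ (m - k) + d)]
    congr 1; omega
  have e4 : (n - 1 - i + k).choose (m - i + k) = ((m - i + k) + d).choose d := by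
    rw [show n - 1 - i + k = (m - i + k) + d by omega,
        ← Nat.choose_symm (by omega : d ≤ (m - i + k) + d)]
    congr 1; omega
  rw [e1, e2, e3, e4]
  have h := aux_main d (i + 1 - k) (m - 1 - i) (i + 2) (by omega)
  rw [show m - 1 - i + (i + 2) = m + 1 by omega,
      show m - 1 - i + (i + 1 - k) = m - k by omega,
      show m - 1 - i + (i + 2 - (i + 1 - k)) = m - i + k by omega] at h
  calc (m + 1 + d).choose d * ((m - 1 - i) + d).choose d
      = ((m - 1 - i) + d).choose d * (m + 1 + d).choose d := by ring
    _ ≤ _ := h
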